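/- Suppose a bundle B* attains the local MEV of the player at state st. Then the local MEV at the resulting state exec st B* equals 0; precisely, 0 is the greatest element of the set { gain (exec st B*) B' : B' reachable, Valid (exec st B*) B' } — the empty bundle is reachable and valid with gain 0, and every reachable valid bundle at exec st B* has gain at most 0. -/

import Mathlib

/-- Execute a bundle (list of transactions) from a state. -/
def exec {T S : Type*} (step : S → T → S) (st : S) (B : List T) : S :=
  List.foldl step st B

/-- The player's gain from executing bundle `B` at state `st`. -/
def gain {T S : Type*} (step : S → T → S) (b : S → ℤ) (st : S) (B : List T) : ℤ :=
  b (exec step st B) - b st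

/-- A bundle is reachable if all of its transactions lie in the player's set `C`. -/
def Reachable {T : Type*} (C : Set T) (B : List T) : Prop :=
  ∀ t ∈ B, t ∈ C

/-- If `B*` attains the local MEV of the player at state `st`, then the local MEV at
the resulting state `exec st B*` equals `0`: `0` is the greatest element of the set of
gains of reachable bundles that are valid at `exec st B*` (the empty bundle being a
witness with gain `0`). -/
theorem local_MEV_zero_after_extraction {T S : Type*} (step : S → T → S) (b : S → ℤ)
    (C : Set T) (Valid : S → List T → Prop)
    (hValidNil : ∀ st : S, Valid st [])
    (hValidApp : ∀ (st : S) (B B' : List T),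
      Valid st B → Valid (exec step st B) B' → Valid st (B ++ B'))
    (st : S) (Bstar : List T)
    (hreach : Reachable C Bstar) (hvalid : Valid st Bstar)
    (hmax : ∀ B : List T, Reachable C B → Valid st B →
      gain step b st B ≤ gain step b st Bstar) :
    IsGreatest {x : ℤ | ∃ B' : List T, Reachable C B' ∧
      Valid (exec step st Bstar) B' ∧ x = gain step b (exec step st Bstar) B'} 0 := by
  constructor
  · exact ⟨[], fun t h => absurd h List.not_mem_nil, hValidNil _, by simp [gain, exec]⟩
  · rintro x ⟨B', hr, hv, rfl⟩
    have hre : Reachable C (Bstar ++ B') := fun t ht => by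
      rcases List.mem_append.1 ht with h | h
      · exact hreach t h
      · exact hr t h
    have := hmax (Bstar ++ B') hre (hValidApp st Bstar B' hvalid hv)
    simp only [gain, exec, List.foldl_append] at this ⊢
    linarith
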